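/- For symmetric positive definite matrices X, Y and a symmetric positive definite matrix A, δ_T(X+A, Y+A) ≤ (α/(α+λ_min(A))) · δ_T(X,Y), where α = max{‖X‖₂, ‖Y‖₂} and λ_min(A) is the smallest eigenvalue of A. -/

import Mathlib

open Matrix Filter

variable {n : ℕ}

/-- Largest (real) eigenvalue: supremum of the real spectrum. -/
noncomputable def maxEig (M : Matrix (Fin n) (Fin n) ℝ) : ℝ := sSup (spectrum ℝ M)

/-- Smallest (real) eigenvalue: infimum of the real spectrum. -/
noncomputable def minEig (M : Matrix (Fin n) (Fin n) ℝ) : ℝ := sInf (spectrum ℝ M)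

/-- Thompson metric via the spectral formula
`δ_T(M,N) = max {log λ_max(M⁻¹N), log λ_max(N⁻¹M)}`. -/
noncomputable def deltaT (X Y : Matrix (Fin n) (Fin n) ℝ) : ℝ :=
  max (Real.log (maxEig (X⁻¹ * Y))) (Real.log (maxEig (Y⁻¹ * X)))

/-- Spectral (ℓ²-operator) norm of a matrix. -/
noncomputable def sNorm (M : Matrix (Fin n) (Fin n) ℝ) : ℝ :=
  ‖Matrix.toEuclideanCLM (𝕜 := ℝ) M‖

open Classical in
/-- The unique positive semidefinite square root (junk value `1` off PSD matrices). -/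
noncomputable def sqrtM (M : Matrix (Fin n) (Fin n) ℝ) : Matrix (Fin n) (Fin n) ℝ :=
  if h : M.PosSemidef then h.1.eigenvectorUnitary.1 * diagonal (Real.sqrt ∘ h.1.eigenvalues) *
    (star h.1.eigenvectorUnitary : Matrix (Fin n) (Fin n) ℝ) else 1

/-- Matrix logarithm via the continuous functional calculus. -/
noncomputable def mlog (M : Matrix (Fin n) (Fin n) ℝ) : Matrix (Fin n) (Fin n) ℝ :=
  cfc Real.log M

/-- Loewner order: `A ⪯ B` iff `B - A` is positive semidefinite. -/
def loewner (A B : Matrix (Fin n) (Fin n) ℝ) : Prop := (B - A).PosSemidef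

section Aux

open Pointwise
open scoped MatrixOrder

lemma psd_smul {M : Matrix (Fin n) (Fin n) ℝ} (hM : M.PosSemidef) {c : ℝ} (hc : 0 ≤ c) :
    (c • M).PosSemidef := by
  refine Matrix.PosSemidef.of_dotProduct_mulVec_nonneg ?_ fun x => ?_
  · unfold Matrix.IsHermitian
    rw [conjTranspose_smul, star_trivial, hM.1.eq]
  · rw [Matrix.smul_mulVec, dotProduct_smul]
    exact mul_nonneg hc (hM.dotProduct_mulVec_nonneg x)

lemma herm_smul {M : Matrix (Fin n) (Fin n) ℝ} (hM : M.IsHermitian) (c : ℝ) :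
    (c • M).IsHermitian := by
  unfold Matrix.IsHermitian
  rw [conjTranspose_smul, star_trivial, hM.eq]

lemma psd_iff_spec {M : Matrix (Fin n) (Fin n) ℝ} (hM : M.IsHermitian) :
    M.PosSemidef ↔ ∀ ν ∈ spectrum ℝ M, 0 ≤ ν := by
  constructor
  · intro h ν hν
    rw [hM.spectrum_real_eq_range_eigenvalues] at hν
    obtain ⟨i, rfl⟩ := hν
    exact h.eigenvalues_nonneg i
  · intro h
    exact hM.posSemidef_iff_eigenvalues_nonneg.mpr fun i =>
      h _ (hM.eigenvalues_mem_spectrum_real i)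

lemma spec_smul_one_sub (H : Matrix (Fin n) (Fin n) ℝ) (μ : ℝ) :
    spectrum ℝ (μ • (1 : Matrix (Fin n) (Fin n) ℝ) - H) = ({μ} : Set ℝ) - spectrum ℝ H := by
  rw [← Algebra.algebraMap_eq_smul_one, ← spectrum.singleton_sub_eq]

lemma spec_sub_smul_one (H : Matrix (Fin n) (Fin n) ℝ) (μ : ℝ) :
    spectrum ℝ (H - μ • (1 : Matrix (Fin n) (Fin n) ℝ)) = spectrum ℝ H - ({μ} : Set ℝ) := by
  rw [← Algebra.algebraMap_eq_smul_one, ← spectrum.sub_singleton_eq]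

lemma herm_le_iff {H : Matrix (Fin n) (Fin n) ℝ} (hH : H.IsHermitian) (μ : ℝ) :
    (μ • (1 : Matrix (Fin n) (Fin n) ℝ) - H).PosSemidef ↔ ∀ ν ∈ spectrum ℝ H, ν ≤ μ := by
  have hherm : (μ • (1 : Matrix (Fin n) (Fin n) ℝ) - H).IsHermitian :=
    (herm_smul Matrix.isHermitian_one μ).sub hH
  rw [psd_iff_spec hherm, spec_smul_one_sub]
  constructor
  · intro h ν hν
    have := h (μ - ν) (Set.sub_mem_sub rfl hν)
    linarith
  · rintro h x hx
    rw [Set.mem_sub] at hx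
    obtain ⟨a, ha, b, hb, rfl⟩ := hx
    rw [Set.mem_singleton_iff] at ha
    subst ha
    have := h b hb
    linarith

lemma herm_ge_iff {H : Matrix (Fin n) (Fin n) ℝ} (hH : H.IsHermitian) (μ : ℝ) :
    (H - μ • (1 : Matrix (Fin n) (Fin n) ℝ)).PosSemidef ↔ ∀ ν ∈ spectrum ℝ H, μ ≤ ν := by
  have hherm : (H - μ • (1 : Matrix (Fin n) (Fin n) ℝ)).IsHermitian :=
    hH.sub (herm_smul Matrix.isHermitian_one μ)
  rw [psd_iff_spec hherm, spec_sub_smul_one]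
  constructor
  · intro h ν hν
    have := h (ν - μ) (Set.sub_mem_sub hν rfl)
    linarith
  · rintro h x hx
    rw [Set.mem_sub] at hx
    obtain ⟨a, ha, b, hb, rfl⟩ := hx
    rw [Set.mem_singleton_iff] at hb
    subst hb
    have := h a ha
    linarith

lemma mulVec_ne_zero {B : Matrix (Fin n) (Fin n) ℝ} (hB : IsUnit B) {x : Fin n → ℝ}
    (hx : x ≠ 0) : B *ᵥ x ≠ 0 := by
  intro h
  apply hx
  have h1 : B⁻¹ * B = 1 := Matrix.nonsing_inv_mul B ((Matrix.isUnit_iff_isUnit_det B).mp hB)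
  calc x = (B⁻¹ * B) *ᵥ x := by rw [h1, Matrix.one_mulVec]
    _ = B⁻¹ *ᵥ (B *ᵥ x) := by rw [Matrix.mulVec_mulVec]
    _ = 0 := by rw [h, Matrix.mulVec_zero]

lemma posDef_conj {N B : Matrix (Fin n) (Fin n) ℝ} (hN : N.PosDef) (hB : IsUnit B) :
    (Bᴴ * N * B).PosDef := by
  refine Matrix.PosDef.of_dotProduct_mulVec_pos (Matrix.isHermitian_conjTranspose_mul_mul B hN.1) fun x hx => ?_
  have key : star x ⬝ᵥ (Bᴴ * N * B) *ᵥ x = star (B *ᵥ x) ⬝ᵥ N *ᵥ (B *ᵥ x) := by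
    rw [← Matrix.mulVec_mulVec, ← Matrix.mulVec_mulVec, star_trivial, star_trivial,
      Matrix.dotProduct_mulVec]
    congr 1
    rw [show (Bᴴ : Matrix (Fin n) (Fin n) ℝ) = Bᵀ from rfl, Matrix.vecMul_transpose]
  rw [key]
  exact hN.dotProduct_mulVec_pos (mulVec_ne_zero hB hx)

lemma sqrt_posDef {M : Matrix (Fin n) (Fin n) ℝ} (hM : M.PosDef) :
    (CFC.sqrt M).PosDef := by
  set R := CFC.sqrt M with hRdef
  have hR : R.PosSemidef := (CFC.sqrt_nonneg M).posSemidef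
  have h2 : R * R = M := CFC.sqrt_mul_sqrt_self M hM.posSemidef.nonneg
  have hdet : R.det ≠ 0 := by
    intro h
    have : M.det = 0 := by rw [← h2, Matrix.det_mul, h, mul_zero]
    exact (ne_of_gt hM.det_pos) this
  have hU : IsUnit R := (Matrix.isUnit_iff_isUnit_det R).mpr (isUnit_iff_ne_zero.mpr hdet)
  refine Matrix.PosDef.of_dotProduct_mulVec_pos hR.1 fun x hx => lt_of_le_of_ne (hR.dotProduct_mulVec_nonneg x) fun h0 => ?_
  have := (hR.dotProduct_mulVec_zero_iff x).mp h0.symm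
  exact mulVec_ne_zero hU hx this

lemma spec_units_conj {R : Matrix (Fin n) (Fin n) ℝ} (hR : IsUnit R)
    (H : Matrix (Fin n) (Fin n) ℝ) :
    spectrum ℝ (R⁻¹ * H * R) = spectrum ℝ H := by
  obtain ⟨u, rfl⟩ := hR
  rw [← Matrix.coe_units_inv]
  exact spectrum.units_conjugate'

/-- The conjugated Hermitian form of `M⁻¹ * N`. -/
lemma exists_conj {M N : Matrix (Fin n) (Fin n) ℝ} (hM : M.PosDef) (hN : N.PosDef) :
    ∃ H : Matrix (Fin n) (Fin n) ℝ, H.PosDef ∧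
      spectrum ℝ (M⁻¹ * N) = spectrum ℝ H ∧
      ∀ μ : ℝ, ((μ • M - N).PosSemidef ↔
        (μ • (1 : Matrix (Fin n) (Fin n) ℝ) - H).PosSemidef) := by
  set R := CFC.sqrt M with hRdef
  have hRpd : R.PosDef := sqrt_posDef hM
  have hRR : R * R = M := CFC.sqrt_mul_sqrt_self M hM.posSemidef.nonneg
  have hRu : IsUnit R := hRpd.isUnit
  have hRdet : IsUnit R.det := (Matrix.isUnit_iff_isUnit_det R).mp hRu
  have hRh : R.IsHermitian := hRpd.1
  have hRih : (R⁻¹).IsHermitian := hRh.inv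
  have hinv : R⁻¹ * R = 1 := Matrix.nonsing_inv_mul R hRdet
  have hinv' : R * R⁻¹ = 1 := Matrix.mul_nonsing_inv R hRdet
  have hRiu : IsUnit (R⁻¹) := ⟨⟨R⁻¹, R, hinv, hinv'⟩, rfl⟩
  set H := R⁻¹ * N * R⁻¹ with hHdef
  have hRMR : R⁻¹ * M * R⁻¹ = 1 := by
    rw [← hRR, ← Matrix.mul_assoc, hinv, Matrix.one_mul, hinv']
  have hRHR : R * H * R = N := by
    rw [hHdef]
    simp only [← Matrix.mul_assoc]
    rw [hinv', Matrix.one_mul, Matrix.mul_assoc, hinv, Matrix.mul_one]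
  refine ⟨H, ?_, ?_, ?_⟩
  · have := posDef_conj hN hRiu
    rwa [hRih.eq] at this
  · have key : R⁻¹ * H * R = M⁻¹ * N := by
      rw [hHdef, ← hRR, Matrix.mul_inv_rev]
      simp only [Matrix.mul_assoc]
      rw [hinv, Matrix.mul_one]
    rw [← key, spec_units_conj hRu]
  · intro μ
    have eq1 : R⁻¹ * (μ • M - N) * R⁻¹ = μ • (1 : Matrix (Fin n) (Fin n) ℝ) - H := by
      rw [Matrix.mul_sub, Matrix.sub_mul, Matrix.mul_smul, Matrix.smul_mul, hRMR, hHdef]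
    have eq2 : R * (μ • (1 : Matrix (Fin n) (Fin n) ℝ) - H) * R = μ • M - N := by
      rw [Matrix.mul_sub, Matrix.sub_mul, Matrix.mul_smul, Matrix.smul_mul, Matrix.mul_one,
        hRR, hRHR]
    constructor
    · intro h
      have := h.conjTranspose_mul_mul_same (R⁻¹)
      rwa [hRih.eq, eq1] at this
    · intro h
      have := h.conjTranspose_mul_mul_same R
      rwa [hRh.eq, eq2] at this

lemma spec_pos {M N : Matrix (Fin n) (Fin n) ℝ} (hM : M.PosDef) (hN : N.PosDef) :
    ∀ ν ∈ spectrum ℝ (M⁻¹ * N), 0 < ν := by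
  obtain ⟨H, hH, hspec, -⟩ := exists_conj hM hN
  intro ν hν
  rw [hspec, hH.1.spectrum_real_eq_range_eigenvalues] at hν
  obtain ⟨i, rfl⟩ := hν
  exact hH.eigenvalues_pos i

lemma spec_nonempty (hn : 0 < n) {H : Matrix (Fin n) (Fin n) ℝ} (hH : H.IsHermitian) :
    (spectrum ℝ H).Nonempty := by
  rw [hH.spectrum_real_eq_range_eigenvalues]
  exact ⟨_, ⟨⟨0, hn⟩, rfl⟩⟩

lemma maxEig_le_iff (hn : 0 < n) {M N : Matrix (Fin n) (Fin n) ℝ}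
    (hM : M.PosDef) (hN : N.PosDef) (μ : ℝ) :
    maxEig (M⁻¹ * N) ≤ μ ↔ (μ • M - N).PosSemidef := by
  obtain ⟨H, hH, hspec, hiff⟩ := exists_conj hM hN
  have hne : (spectrum ℝ H).Nonempty := spec_nonempty hn hH.1
  have hbdd : BddAbove (spectrum ℝ H) := (Matrix.finite_real_spectrum).bddAbove
  rw [maxEig, hspec, csSup_le_iff hbdd hne, hiff μ, ← herm_le_iff hH.1 μ]

lemma maxEig_pos (hn : 0 < n) {M N : Matrix (Fin n) (Fin n) ℝ}
    (hM : M.PosDef) (hN : N.PosDef) : 0 < maxEig (M⁻¹ * N) := by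
  obtain ⟨H, hH, hspec, -⟩ := exists_conj hM hN
  have hne : (spectrum ℝ (M⁻¹ * N)).Nonempty := by
    rw [hspec]; exact spec_nonempty hn hH.1
  have hbdd : BddAbove (spectrum ℝ (M⁻¹ * N)) := by
    rw [hspec]; exact (Matrix.finite_real_spectrum).bddAbove
  obtain ⟨ν, hν⟩ := hne
  exact lt_of_lt_of_le (spec_pos hM hN ν hν) (le_csSup hbdd hν)

lemma le_smul_one (hn : 0 < n) {X : Matrix (Fin n) (Fin n) ℝ} (hX : X.IsHermitian)
    {α : ℝ} (hα : sNorm X ≤ α) :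
    (α • (1 : Matrix (Fin n) (Fin n) ℝ) - X).PosSemidef := by
  rw [herm_le_iff hX α]
  intro ν hν
  haveI : Nonempty (Fin n) := ⟨⟨0, hn⟩⟩
  have h1 : ν ∈ spectrum ℝ (Matrix.toEuclideanCLM (𝕜 := ℝ) X) := by
    rwa [AlgEquiv.spectrum_eq (Matrix.toEuclideanCLM (𝕜 := ℝ)) X]
  have h2 : ‖ν‖ ≤ ‖Matrix.toEuclideanCLM (𝕜 := ℝ) X‖ := spectrum.norm_le_norm_of_mem h1
  calc ν ≤ |ν| := le_abs_self ν
    _ ≤ sNorm X := h2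
    _ ≤ α := hα

lemma minEig_smul_one_le {A : Matrix (Fin n) (Fin n) ℝ} (hA : A.IsHermitian) :
    (A - minEig A • (1 : Matrix (Fin n) (Fin n) ℝ)).PosSemidef := by
  rw [herm_ge_iff hA]
  intro ν hν
  exact csInf_le (Matrix.finite_real_spectrum).bddBelow hν

lemma minEig_pos (hn : 0 < n) {A : Matrix (Fin n) (Fin n) ℝ} (hA : A.PosDef) :
    0 < minEig A := by
  have hne : (spectrum ℝ A).Nonempty := spec_nonempty hn hA.1
  have hmem : minEig A ∈ spectrum ℝ A :=
    hne.csInf_mem (Matrix.finite_real_spectrum)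
  rw [hA.1.spectrum_real_eq_range_eigenvalues] at hmem
  obtain ⟨i, hi⟩ := hmem
  rw [← hi]
  exact hA.eigenvalues_pos i

lemma sNorm_pos (hn : 0 < n) {X : Matrix (Fin n) (Fin n) ℝ} (hX : X.PosDef) :
    0 < sNorm X := by
  have hmem := hX.1.eigenvalues_mem_spectrum_real ⟨0, hn⟩
  have h1 : hX.1.eigenvalues ⟨0, hn⟩ ∈ spectrum ℝ (Matrix.toEuclideanCLM (𝕜 := ℝ) X) := by
    rwa [AlgEquiv.spectrum_eq (Matrix.toEuclideanCLM (𝕜 := ℝ)) X]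
  have h2 := spectrum.norm_le_norm_mul_of_mem h1
  have h3 : 0 < hX.1.eigenvalues ⟨0, hn⟩ := hX.eigenvalues_pos _
  by_contra h
  push_neg at h
  have : ‖Matrix.toEuclideanCLM (𝕜 := ℝ) X‖ = 0 := le_antisymm h (norm_nonneg _)
  rw [this, zero_mul] at h2
  have : |hX.1.eigenvalues ⟨0, hn⟩| ≤ 0 := h2
  have := le_abs_self (hX.1.eigenvalues ⟨0, hn⟩)
  linarith

lemma deltaT_nonneg (hn : 0 < n) {X Y : Matrix (Fin n) (Fin n) ℝ}
    (hX : X.PosDef) (hY : Y.PosDef) : 0 ≤ deltaT X Y := by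
  set a := maxEig (X⁻¹ * Y) with ha
  set b := maxEig (Y⁻¹ * X) with hb
  have ha0 : 0 < a := maxEig_pos hn hX hY
  have hb0 : 0 < b := maxEig_pos hn hY hX
  have h1 : (a • X - Y).PosSemidef := (maxEig_le_iff hn hX hY a).mp le_rfl
  have h2 : (b • Y - X).PosSemidef := (maxEig_le_iff hn hY hX b).mp le_rfl
  have h3 : ((a * b - 1) • Y).PosSemidef := by
    have := (psd_smul h2 ha0.le).add h1
    convert this using 1
    module
  have hab : 1 ≤ a * b := by
    by_contra hlt
    push_neg at hlt
    set x : Fin n → ℝ := fun _ => 1 with hxdef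
    have hx : x ≠ 0 := by
      intro h
      have := congrFun h ⟨0, hn⟩
      simp [hxdef] at this
    have hq := h3.dotProduct_mulVec_nonneg x
    rw [Matrix.smul_mulVec, dotProduct_smul, smul_eq_mul, star_trivial] at hq
    have hY2 := hY.dotProduct_mulVec_pos hx
    rw [star_trivial] at hY2
    nlinarith
  have hsum : 0 ≤ Real.log a + Real.log b := by
    rw [← Real.log_mul ha0.ne' hb0.ne']
    exact Real.log_nonneg hab
  have h4 := le_max_left (Real.log a) (Real.log b)
  have h5 := le_max_right (Real.log a) (Real.log b)
  unfold deltaT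
  rw [← ha, ← hb]
  linarith

lemma scalar_key {α lam c t : ℝ} (hα : 0 < α) (hlam : 0 < lam) (ht : 0 ≤ t)
    (hc : c = α / (α + lam)) :
    0 ≤ (1 - Real.exp (-(c * t))) * lam - (Real.exp (-(c * t)) - Real.exp (-t)) * α := by
  have hsum : 0 < α + lam := by linarith
  have hc0 : 0 ≤ c := by rw [hc]; positivity
  have hc1 : c ≤ 1 := by rw [hc, div_le_one hsum]; linarith
  have hcmul : c * (α + lam) = α := by rw [hc, div_mul_cancel₀]; exact hsum.ne'
  have hconv := convexOn_exp.2 (Set.mem_univ (-t)) (Set.mem_univ (0 : ℝ)) hc0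
    (by linarith : (0:ℝ) ≤ 1 - c) (by ring)
  simp only [smul_eq_mul, mul_zero, add_zero, Real.exp_zero, mul_one] at hconv
  have hE : Real.exp (-(c * t)) ≤ c * Real.exp (-t) + (1 - c) := by
    convert hconv using 2
    · rfl
    ring
  have he0 : 0 ≤ Real.exp (-t) := (Real.exp_pos _).le
  nlinarith [hE, hcmul, he0, hsum]

lemma side (hn : 0 < n) {A X Y : Matrix (Fin n) (Fin n) ℝ}
    (hA : A.PosDef) (hX : X.PosDef) (hY : Y.PosDef)
    {α lam t : ℝ} (hα : 0 < α) (hlam : 0 < lam) (ht : 0 ≤ t)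
    (hXα : (α • (1 : Matrix (Fin n) (Fin n) ℝ) - X).PosSemidef)
    (hAlam : (A - lam • (1 : Matrix (Fin n) (Fin n) ℝ)).PosSemidef)
    (hYX : Real.log (maxEig (Y⁻¹ * X)) ≤ t) :
    Real.log (maxEig ((Y + A)⁻¹ * (X + A))) ≤ (α / (α + lam)) * t := by
  set c := α / (α + lam) with hc
  have hsum : 0 < α + lam := by linarith
  have hc0 : 0 ≤ c := by rw [hc]; positivity
  have hc1 : c ≤ 1 := by rw [hc, div_le_one hsum]; linarith
  have hct0 : 0 ≤ c * t := mul_nonneg hc0 ht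
  have hctt : c * t ≤ t := by nlinarith
  have h1 : maxEig (Y⁻¹ * X) ≤ Real.exp t := by
    have h := Real.exp_le_exp.mpr hYX
    rwa [Real.exp_log (maxEig_pos hn hY hX)] at h
  have h2 : (Real.exp t • Y - X).PosSemidef := (maxEig_le_iff hn hY hX _).mp h1
  have PSD1 : (Y - Real.exp (-t) • X).PosSemidef := by
    have h := psd_smul h2 (Real.exp_nonneg (-t))
    have he : Real.exp (-t) * Real.exp t = 1 := by
      rw [← Real.exp_add]; simp
    convert h using 1
    rw [smul_sub, smul_smul, he, one_smul]
  have PSD2 : ((Real.exp (-(c * t)) - Real.exp (-t)) •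
      (α • (1 : Matrix (Fin n) (Fin n) ℝ) - X)).PosSemidef := by
    refine psd_smul hXα ?_
    have := Real.exp_le_exp.mpr (neg_le_neg hctt)
    linarith
  have PSD3 : ((1 - Real.exp (-(c * t))) •
      (A - lam • (1 : Matrix (Fin n) (Fin n) ℝ))).PosSemidef := by
    refine psd_smul hAlam ?_
    have : Real.exp (-(c * t)) ≤ Real.exp 0 := Real.exp_le_exp.mpr (by linarith)
    rw [Real.exp_zero] at this
    linarith
  have PSD4 : (((1 - Real.exp (-(c * t))) * lam -
      (Real.exp (-(c * t)) - Real.exp (-t)) * α) •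
      (1 : Matrix (Fin n) (Fin n) ℝ)).PosSemidef :=
    psd_smul Matrix.PosSemidef.one (scalar_key hα hlam ht hc)
  have hsumPSD : ((Y + A) - Real.exp (-(c * t)) • (X + A)).PosSemidef := by
    have h := ((PSD1.add PSD2).add PSD3).add PSD4
    convert h using 1
    module
  have hfin : (Real.exp (c * t) • (Y + A) - (X + A)).PosSemidef := by
    have h := psd_smul hsumPSD (Real.exp_nonneg (c * t))
    have he : Real.exp (c * t) * Real.exp (-(c * t)) = 1 := by
      rw [← Real.exp_add]; simp
    convert h using 1
    rw [smul_sub, smul_smul, he, one_smul]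
  have hle : maxEig ((Y + A)⁻¹ * (X + A)) ≤ Real.exp (c * t) :=
    (maxEig_le_iff hn (hY.add hA) (hX.add hA) _).mpr hfin
  calc Real.log (maxEig ((Y + A)⁻¹ * (X + A)))
      ≤ Real.log (Real.exp (c * t)) := by
        apply Real.log_le_log (maxEig_pos hn (hY.add hA) (hX.add hA)) hle
    _ = c * t := Real.log_exp _

end Aux


theorem stmt4 (A X Y : Matrix (Fin n) (Fin n) ℝ)
    (hA : A.PosDef) (hX : X.PosDef) (hY : Y.PosDef) :
    deltaT (X + A) (Y + A) ≤
      (max (sNorm X) (sNorm Y) / (max (sNorm X) (sNorm Y) + minEig A)) * deltaT X Y := by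
  rcases Nat.eq_zero_or_pos n with hn | hn
  · subst hn
    haveI : Subsingleton (Matrix (Fin 0) (Fin 0) ℝ) :=
      ⟨fun a b => by ext i; exact i.elim0⟩
    have hds : ∀ P Q : Matrix (Fin 0) (Fin 0) ℝ, deltaT P Q = 0 := by
      intro P Q
      unfold deltaT maxEig
      rw [spectrum.of_subsingleton, spectrum.of_subsingleton, Real.sSup_empty,
        Real.log_zero, max_self]
    rw [hds, hds, mul_zero]
  · set α := max (sNorm X) (sNorm Y) with hαdef
    set lam := minEig A with hlamdef
    set t := deltaT X Y with htdef
    have hα : 0 < α := lt_of_lt_of_le (sNorm_pos hn hX) (le_max_left _ _)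
    have hlam : 0 < lam := minEig_pos hn hA
    have ht : 0 ≤ t := deltaT_nonneg hn hX hY
    have hXα : (α • (1 : Matrix (Fin n) (Fin n) ℝ) - X).PosSemidef :=
      le_smul_one hn hX.1 (le_max_left _ _)
    have hYα : (α • (1 : Matrix (Fin n) (Fin n) ℝ) - Y).PosSemidef :=
      le_smul_one hn hY.1 (le_max_right _ _)
    have hAlam : (A - lam • (1 : Matrix (Fin n) (Fin n) ℝ)).PosSemidef :=
      minEig_smul_one_le hA.1
    have hXY : Real.log (maxEig (X⁻¹ * Y)) ≤ t := le_max_left _ _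
    have hYX : Real.log (maxEig (Y⁻¹ * X)) ≤ t := le_max_right _ _
    have s1 : Real.log (maxEig ((X + A)⁻¹ * (Y + A))) ≤ α / (α + lam) * t :=
      side hn hA hY hX hα hlam ht hYα hAlam hXY
    have s2 : Real.log (maxEig ((Y + A)⁻¹ * (X + A))) ≤ α / (α + lam) * t :=
      side hn hA hX hY hα hlam ht hXα hAlam hYX
    exact max_le s1 s2
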